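/- arXiv:1312.2730 — 2 statements merged into one kernel-verified Lean document; each statement's English description precedes it below -/
import Mathlib

section
/- Let T be a trigraph admitting a 2-join (X1, X2) with split (A1, B1, C1, A2, B2, C2), and for i = 1, 2 let T_{Xi} be either the odd block of decomposition or the even block of decomposition of T with respect to this split. If T_{X1} admits a CS-separator of size k1 and T_{X2} admits a CS-separator of size k2, then T admits a CS-separator of size at most k1 + k2. -/
/-- A trigraph: a symmetric adjacency function with values in {-1, 0, 1}. -/
structure Trigraph (V : Type) where
  theta : V → V → ℤ
  symm : ∀ u v, theta u v = theta v u
  range : ∀ u v, theta u v = -1 ∨ theta u v = 0 ∨ theta u v = 1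

namespace Trigraph

variable {V : Type}

def StrongAdj (T : Trigraph V) (u v : V) : Prop := u ≠ v ∧ T.theta u v = 1

def StrongAntiAdj (T : Trigraph V) (u v : V) : Prop := u ≠ v ∧ T.theta u v = -1

/-- A switchable (semiadjacent) pair. -/
def Switchable (T : Trigraph V) (u v : V) : Prop := u ≠ v ∧ T.theta u v = 0

def Adj (T : Trigraph V) (u v : V) : Prop := u ≠ v ∧ 0 ≤ T.theta u v

def AntiAdj (T : Trigraph V) (u v : V) : Prop := u ≠ v ∧ T.theta u v ≤ 0

/-- The complement trigraph. -/
def compl (T : Trigraph V) : Trigraph V where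
  theta := fun u v => - T.theta u v
  symm := fun u v => by show -T.theta u v = -T.theta v u; rw [T.symm u v]
  range := fun u v => by
    show -T.theta u v = -1 ∨ -T.theta u v = 0 ∨ -T.theta u v = 1
    rcases T.range u v with h | h | h <;> simp [h]

/-- The full realization: all switchable pairs become edges. -/
def fullRealization (T : Trigraph V) : SimpleGraph V where
  Adj := T.Adj
  symm := by
    refine ⟨fun u v h => ?_⟩
    exact ⟨Ne.symm h.1, by rw [T.symm v u]; exact h.2⟩
  loopless := ⟨fun v h => h.1 rfl⟩

/-- `G` is a realization of `T`. -/
def IsRealization (T : Trigraph V) (G : SimpleGraph V) : Prop :=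
  (∀ u v, T.StrongAdj u v → G.Adj u v) ∧ (∀ u v, T.StrongAntiAdj u v → ¬ G.Adj u v)

/-- A graph contains an induced cycle of odd length at least 5. -/
def GraphHasOddHole (G : SimpleGraph V) : Prop :=
  ∃ n : ℕ, 2 ≤ n ∧ ∃ f : ZMod (2 * n + 1) → V, Function.Injective f ∧
    ∀ i j, G.Adj (f i) (f j) ↔ (j = i + 1 ∨ i = j + 1)

def GraphIsBerge (G : SimpleGraph V) : Prop := ¬ GraphHasOddHole G ∧ ¬ GraphHasOddHole Gᶜ

/-- A trigraph is Berge if every realization is a Berge graph. -/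
def Berge (T : Trigraph V) : Prop := ∀ G : SimpleGraph V, T.IsRealization G → GraphIsBerge G

/-- The graph on V whose edges are the switchable pairs of T. -/
def switchGraph (T : Trigraph V) : SimpleGraph V where
  Adj := T.Switchable
  symm := by
    refine ⟨fun u v h => ?_⟩
    exact ⟨Ne.symm h.1, by rw [T.symm v u]; exact h.2⟩
  loopless := ⟨fun v h => h.1 rfl⟩

/-- Membership in the class 𝓕 of Berge trigraphs with restricted switchable components. -/
def InF (T : Trigraph V) : Prop :=
  T.Berge ∧
  (∀ v : V, {e ∈ T.switchGraph.edgeSet | ∀ x ∈ e, T.switchGraph.Reachable v x}.ncard ≤ 2) ∧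
  (∀ v x y : V, x ≠ y → T.Switchable v x → T.Switchable v y →
    ((∀ u, u ≠ v → u ≠ x → u ≠ y → T.StrongAdj v u) ∧ T.StrongAdj x y) ∨
    ((∀ u, u ≠ v → u ≠ x → u ≠ y → T.StrongAntiAdj v u) ∧ T.StrongAntiAdj x y))

/-- A path of length `k` in a trigraph, given by its sequence of vertices. -/
def IsPath (T : Trigraph V) (k : ℕ) (f : Fin (k + 1) → V) : Prop :=
  Function.Injective f ∧ ∀ i j : Fin (k + 1),
    (j.val = i.val + 1 → T.Adj (f i) (f j)) ∧ (i.val + 1 < j.val → T.AntiAdj (f i) (f j))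

/-- `X` is connected: the full realization of `T[X]` is connected. -/
def ConnectedOn (T : Trigraph V) (X : Set V) : Prop :=
  (T.fullRealization.induce X).Connected

/-- `X` is anticonnected: the full realization of the complement of `T[X]` is connected. -/
def AnticonnectedOn (T : Trigraph V) (X : Set V) : Prop :=
  (T.compl.fullRealization.induce X).Connected

def IsSkewPartition (T : Trigraph V) (A B : Set V) : Prop :=
  A.Nonempty ∧ B.Nonempty ∧ Disjoint A B ∧ A ∪ B = Set.univ ∧
  ¬ T.ConnectedOn A ∧ ¬ T.AnticonnectedOn B

def IsBalancedSkewPartition (T : Trigraph V) (A B : Set V) : Prop :=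
  T.IsSkewPartition A B ∧
  (∀ (k : ℕ) (f : Fin (k + 1) → V), Odd k → 1 < k → T.IsPath k f →
    ¬ (f 0 ∈ B ∧ f (Fin.last k) ∈ B ∧ ∀ i, i ≠ 0 → i ≠ Fin.last k → f i ∈ A)) ∧
  (∀ (k : ℕ) (f : Fin (k + 1) → V), Odd k → 1 < k → T.compl.IsPath k f →
    ¬ (f 0 ∈ A ∧ f (Fin.last k) ∈ A ∧ ∀ i, i ≠ 0 → i ≠ Fin.last k → f i ∈ B))

def HasBalancedSkewPartition (T : Trigraph V) : Prop :=
  ∃ A B, T.IsBalancedSkewPartition A B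

def IsClique (T : Trigraph V) (K : Set V) : Prop := K.Pairwise T.Adj

def IsStable (T : Trigraph V) (S : Set V) : Prop := S.Pairwise T.AntiAdj

def IsCut (c : Set V × Set V) : Prop := Disjoint c.1 c.2 ∧ c.1 ∪ c.2 = Set.univ

def IsCSSeparator (T : Trigraph V) (F : Finset (Set V × Set V)) : Prop :=
  (∀ c ∈ F, IsCut c) ∧
  ∀ K S : Set V, T.IsClique K → T.IsStable S → Disjoint K S →
    ∃ c ∈ F, K ⊆ c.1 ∧ S ⊆ c.2

end Trigraph

namespace Trigraph

variable {V : Type}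

/-- `C` is a connected component of the subgraph of `G` induced on `X`. -/
def GIsComponentOf (G : SimpleGraph V) (X C : Set V) : Prop :=
  C ⊆ X ∧ C.Nonempty ∧ (G.induce C).Connected ∧
  ∀ D : Set V, C ⊆ D → D ⊆ X → (G.induce D).Connected → D = C

/-- `(A1, B1, C1, A2, B2, C2)` is a split of a 2-join `(A1 ∪ B1 ∪ C1, A2 ∪ B2 ∪ C2)` of `T`. -/
def IsTwoJoinSplit (T : Trigraph V) (A1 B1 C1 A2 B2 C2 : Set V) : Prop :=
  A1.Nonempty ∧ B1.Nonempty ∧ A2.Nonempty ∧ B2.Nonempty ∧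
  ([A1, B1, C1, A2, B2, C2] : List (Set V)).Pairwise Disjoint ∧
  (A1 ∪ B1 ∪ C1) ∪ (A2 ∪ B2 ∪ C2) = Set.univ ∧
  (∀ u ∈ A1 ∪ B1 ∪ C1, ∀ v ∈ A2 ∪ B2 ∪ C2, ¬ T.Switchable u v) ∧
  (∀ u ∈ A1, ∀ v ∈ A2, T.StrongAdj u v) ∧
  (∀ u ∈ B1, ∀ v ∈ B2, T.StrongAdj u v) ∧
  (∀ u ∈ A1 ∪ B1 ∪ C1, ∀ v ∈ A2 ∪ B2 ∪ C2,
    ¬ (u ∈ A1 ∧ v ∈ A2) → ¬ (u ∈ B1 ∧ v ∈ B2) → T.StrongAntiAdj u v) ∧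
  3 ≤ (A1 ∪ B1 ∪ C1).ncard ∧ 3 ≤ (A2 ∪ B2 ∪ C2).ncard ∧
  (∀ a b : V, A1 = {a} → B1 = {b} →
    ¬ ∃ c, C1 = {c} ∧ T.fullRealization.Adj a c ∧ T.fullRealization.Adj c b ∧
      ¬ T.fullRealization.Adj a b) ∧
  (∀ a b : V, A2 = {a} → B2 = {b} →
    ¬ ∃ c, C2 = {c} ∧ T.fullRealization.Adj a c ∧ T.fullRealization.Adj c b ∧
      ¬ T.fullRealization.Adj a b) ∧
  (∀ C, GIsComponentOf T.fullRealization (A1 ∪ B1 ∪ C1) C →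
    (C ∩ A1).Nonempty ∧ (C ∩ B1).Nonempty) ∧
  (∀ C, GIsComponentOf T.fullRealization (A2 ∪ B2 ∪ C2) C →
    (C ∩ A2).Nonempty ∧ (C ∩ B2).Nonempty)

open scoped Classical in
/-- Adjacency value between a kept vertex and a marker vertex: the marker `0` is strongly
complete to `A`, the marker `1` is strongly complete to `B`, all other pairs are strongly
antiadjacent. -/
noncomputable def markTheta2 (A B : Set V) (u : V) (i : Fin 2) : ℤ :=
  if (i = 0 ∧ u ∈ A) ∨ (i = 1 ∧ u ∈ B) then 1 else -1

lemma markTheta2_range (A B : Set V) (u : V) (i : Fin 2) :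
    markTheta2 A B u i = -1 ∨ markTheta2 A B u i = 0 ∨ markTheta2 A B u i = 1 := by
  unfold markTheta2
  split
  · exact Or.inr (Or.inr rfl)
  · exact Or.inl rfl

open scoped Classical in
/-- Adjacency value between a kept vertex and a marker vertex (even case, markers
`0 = a`, `1 = b`, `2 = c`). -/
noncomputable def markTheta3 (A B : Set V) (u : V) (i : Fin 3) : ℤ :=
  if (i = 0 ∧ u ∈ A) ∨ (i = 1 ∧ u ∈ B) then 1 else -1

lemma markTheta3_range (A B : Set V) (u : V) (i : Fin 3) :
    markTheta3 A B u i = -1 ∨ markTheta3 A B u i = 0 ∨ markTheta3 A B u i = 1 := by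
  unfold markTheta3
  split
  · exact Or.inr (Or.inr rfl)
  · exact Or.inl rfl

/-- Adjacency value among the three marker vertices in the even block: `a c` and `c b`
are switchable pairs, `a b` is strongly antiadjacent. -/
def finTheta3 (i j : Fin 3) : ℤ :=
  if i = j then 1 else if i = 2 ∨ j = 2 then 0 else -1

lemma finTheta3_symm : ∀ i j : Fin 3, finTheta3 i j = finTheta3 j i := by decide

lemma finTheta3_range :
    ∀ i j : Fin 3, finTheta3 i j = -1 ∨ finTheta3 i j = 0 ∨ finTheta3 i j = 1 := by decide

/-- The odd block of decomposition keeping the side `A ∪ B ∪ C`: two marker vertices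
`inr 0 = a` (strongly complete to `A`) and `inr 1 = b` (strongly complete to `B`), forming
a switchable pair, all other new pairs strongly antiadjacent. -/
noncomputable def oddBlock (T : Trigraph V) (A B C : Set V) :
    Trigraph (↥(A ∪ B ∪ C) ⊕ Fin 2) where
  theta := Sum.elim
    (fun u => Sum.elim (fun v => T.theta u.1 v.1) (fun i => markTheta2 A B u.1 i))
    (fun i => Sum.elim (fun v => markTheta2 A B v.1 i) (fun j => if i = j then 1 else 0))
  symm := by
    rintro (u | i) (v | j) <;> simp only [Sum.elim_inl, Sum.elim_inr]
    · exact T.symm _ _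
    · by_cases h : i = j
      · rw [h]
      · rw [if_neg h, if_neg fun hh => h hh.symm]
  range := by
    rintro (u | i) (v | j) <;> simp only [Sum.elim_inl, Sum.elim_inr]
    · exact T.range _ _
    · exact markTheta2_range A B u.1 j
    · exact markTheta2_range A B v.1 i
    · by_cases h : i = j
      · rw [if_pos h]; exact Or.inr (Or.inr rfl)
      · rw [if_neg h]; exact Or.inr (Or.inl rfl)

/-- The even block of decomposition keeping the side `A ∪ B ∪ C`: three marker vertices
`inr 0 = a` (strongly complete to `A`), `inr 1 = b` (strongly complete to `B`) and
`inr 2 = c`, with `a c` and `c b` switchable pairs, all other new pairs strongly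
antiadjacent. -/
noncomputable def evenBlock (T : Trigraph V) (A B C : Set V) :
    Trigraph (↥(A ∪ B ∪ C) ⊕ Fin 3) where
  theta := Sum.elim
    (fun u => Sum.elim (fun v => T.theta u.1 v.1) (fun i => markTheta3 A B u.1 i))
    (fun i => Sum.elim (fun v => markTheta3 A B v.1 i) (fun j => finTheta3 i j))
  symm := by
    rintro (u | i) (v | j) <;> simp only [Sum.elim_inl, Sum.elim_inr]
    · exact T.symm _ _
    · exact finTheta3_symm i j
  range := by
    rintro (u | i) (v | j) <;> simp only [Sum.elim_inl, Sum.elim_inr]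
    · exact T.range _ _
    · exact markTheta3_range A B u.1 j
    · exact markTheta3_range A B v.1 i
    · exact finTheta3_range i j

end Trigraph
namespace Trigraph

/-- Lift a cut of a block of decomposition to a cut of the original trigraph. -/
def liftCut {V M : Type} (X A2 B2 : Set V) (am bm : M)
    (c : Set (↥X ⊕ M) × Set (↥X ⊕ M)) : Set V × Set V :=
  ({v | (∃ h : v ∈ X, Sum.inl ⟨v, h⟩ ∈ c.1) ∨ (v ∈ A2 ∧ Sum.inr am ∈ c.1) ∨
      (v ∈ B2 ∧ Sum.inr bm ∈ c.1)},
   {v | (∃ h : v ∈ X, Sum.inl ⟨v, h⟩ ∈ c.1) ∨ (v ∈ A2 ∧ Sum.inr am ∈ c.1) ∨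
      (v ∈ B2 ∧ Sum.inr bm ∈ c.1)}ᶜ)

lemma side_lemma {V : Type} (T : Trigraph V) (A1 B1 C1 A2 B2 C2 : Set V)
    (huniv : (A1 ∪ B1 ∪ C1) ∪ (A2 ∪ B2 ∪ C2) = Set.univ)
    (hd1 : Disjoint (A1 ∪ B1 ∪ C1) A2) (hd2 : Disjoint (A1 ∪ B1 ∪ C1) B2)
    (hadjA : ∀ u ∈ A1, ∀ v ∈ A2, T.theta u v = 1)
    (hantiA : ∀ u ∈ A1 ∪ B1 ∪ C1, ∀ v ∈ A2, u ∉ A1 → T.theta u v = -1)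
    (hadjB : ∀ u ∈ B1, ∀ v ∈ B2, T.theta u v = 1)
    (hantiB : ∀ u ∈ A1 ∪ B1 ∪ C1, ∀ v ∈ B2, u ∉ B1 → T.theta u v = -1)
    {M : Type} (am bm : M) (hab : am ≠ bm)
    (T₁ : Trigraph (↥(A1 ∪ B1 ∪ C1) ⊕ M))
    (hll : ∀ u v : ↥(A1 ∪ B1 ∪ C1), T₁.theta (Sum.inl u) (Sum.inl v) = T.theta u.1 v.1)
    (ha1 : ∀ u : ↥(A1 ∪ B1 ∪ C1), u.1 ∈ A1 → T₁.theta (Sum.inl u) (Sum.inr am) = 1)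
    (ha0 : ∀ u : ↥(A1 ∪ B1 ∪ C1), u.1 ∉ A1 → T₁.theta (Sum.inl u) (Sum.inr am) = -1)
    (hb1 : ∀ u : ↥(A1 ∪ B1 ∪ C1), u.1 ∈ B1 → T₁.theta (Sum.inl u) (Sum.inr bm) = 1)
    (hb0 : ∀ u : ↥(A1 ∪ B1 ∪ C1), u.1 ∉ B1 → T₁.theta (Sum.inl u) (Sum.inr bm) = -1)
    (hABm : T₁.theta (Sum.inr am) (Sum.inr bm) ≤ 0)
    (F : Finset (Set (↥(A1 ∪ B1 ∪ C1) ⊕ M) × Set (↥(A1 ∪ B1 ∪ C1) ⊕ M)))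
    (hF : T₁.IsCSSeparator F) :
    ∃ F' : Finset (Set V × Set V), F'.card ≤ F.card ∧ (∀ c ∈ F', IsCut c) ∧
      ∀ K S : Set V, T.IsClique K → T.IsStable S → Disjoint K S →
        K ∩ C2 = ∅ → ¬((K ∩ A2).Nonempty ∧ (K ∩ B2).Nonempty) →
        ((K ∩ A2).Nonempty → ¬(S ∩ A2).Nonempty) →
        ((K ∩ B2).Nonempty → ¬(S ∩ B2).Nonempty) →
        ∃ c ∈ F', K ⊆ c.1 ∧ S ⊆ c.2 := by
  classical
  refine ⟨F.image (liftCut (A1 ∪ B1 ∪ C1) A2 B2 am bm), Finset.card_image_le, ?_, ?_⟩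
  · intro c hc
    obtain ⟨d, -, rfl⟩ := Finset.mem_image.mp hc
    exact ⟨disjoint_compl_right, Set.union_compl_self _⟩
  · intro K S hK hS hKS hKC2 hKAB hKSA hKSB
    have hKA1 : (K ∩ A2).Nonempty → ∀ u : ↥(A1 ∪ B1 ∪ C1), u.1 ∈ K → u.1 ∈ A1 := by
      rintro ⟨v, hvK, hvA2⟩ u huK
      by_contra h
      have hne : u.1 ≠ v := fun e => Set.disjoint_left.mp hd1 u.2 (e ▸ hvA2)
      have h1 := (hK huK hvK hne).2
      have h2 := hantiA u.1 u.2 v hvA2 h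
      omega
    have hKB1 : (K ∩ B2).Nonempty → ∀ u : ↥(A1 ∪ B1 ∪ C1), u.1 ∈ K → u.1 ∈ B1 := by
      rintro ⟨v, hvK, hvB2⟩ u huK
      by_contra h
      have hne : u.1 ≠ v := fun e => Set.disjoint_left.mp hd2 u.2 (e ▸ hvB2)
      have h1 := (hK huK hvK hne).2
      have h2 := hantiB u.1 u.2 v hvB2 h
      omega
    have hSA1 : (S ∩ A2).Nonempty → ∀ u : ↥(A1 ∪ B1 ∪ C1), u.1 ∈ S → u.1 ∉ A1 := by
      rintro ⟨v, hvS, hvA2⟩ u huS hA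
      have hne : u.1 ≠ v := fun e => Set.disjoint_left.mp hd1 u.2 (e ▸ hvA2)
      have h1 := (hS huS hvS hne).2
      have h2 := hadjA u.1 hA v hvA2
      omega
    have hSB1 : (S ∩ B2).Nonempty → ∀ u : ↥(A1 ∪ B1 ∪ C1), u.1 ∈ S → u.1 ∉ B1 := by
      rintro ⟨v, hvS, hvB2⟩ u huS hB
      have hne : u.1 ≠ v := fun e => Set.disjoint_left.mp hd2 u.2 (e ▸ hvB2)
      have h1 := (hS huS hvS hne).2
      have h2 := hadjB u.1 hB v hvB2
      omega
    have hK' : T₁.IsClique {x : ↥(A1 ∪ B1 ∪ C1) ⊕ M | Sum.elim (fun u => u.1 ∈ K)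
        (fun m => (m = am ∧ (K ∩ A2).Nonempty) ∨ (m = bm ∧ (K ∩ B2).Nonempty)) x} := by
      intro x hx y hy hxy
      rcases x with u | m <;> rcases y with v | m' <;>
        simp only [Set.mem_setOf_eq, Sum.elim_inl, Sum.elim_inr] at hx hy
      · have hne : u.1 ≠ v.1 := fun e => hxy (by rw [Subtype.ext e])
        exact ⟨hxy, by rw [hll]; exact (hK hx hy hne).2⟩
      · refine ⟨hxy, ?_⟩
        rcases hy with ⟨rfl, hKA⟩ | ⟨rfl, hKB⟩
        · rw [ha1 u (hKA1 hKA u hx)]; norm_num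
        · rw [hb1 u (hKB1 hKB u hx)]; norm_num
      · refine ⟨hxy, ?_⟩
        rw [T₁.symm]
        rcases hx with ⟨rfl, hKA⟩ | ⟨rfl, hKB⟩
        · rw [ha1 v (hKA1 hKA v hy)]; norm_num
        · rw [hb1 v (hKB1 hKB v hy)]; norm_num
      · exfalso
        rcases hx with ⟨rfl, hKA⟩ | ⟨rfl, hKB⟩ <;> rcases hy with ⟨rfl, hKA'⟩ | ⟨rfl, hKB'⟩
        · exact hxy rfl
        · exact hKAB ⟨hKA, hKB'⟩
        · exact hKAB ⟨hKA', hKB⟩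
        · exact hxy rfl
    have hS' : T₁.IsStable {x : ↥(A1 ∪ B1 ∪ C1) ⊕ M | Sum.elim (fun u => u.1 ∈ S)
        (fun m => (m = am ∧ (S ∩ A2).Nonempty) ∨ (m = bm ∧ (S ∩ B2).Nonempty)) x} := by
      intro x hx y hy hxy
      rcases x with u | m <;> rcases y with v | m' <;>
        simp only [Set.mem_setOf_eq, Sum.elim_inl, Sum.elim_inr] at hx hy
      · have hne : u.1 ≠ v.1 := fun e => hxy (by rw [Subtype.ext e])
        exact ⟨hxy, by rw [hll]; exact (hS hx hy hne).2⟩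
      · refine ⟨hxy, ?_⟩
        rcases hy with ⟨rfl, hSA⟩ | ⟨rfl, hSB⟩
        · rw [ha0 u (hSA1 hSA u hx)]; norm_num
        · rw [hb0 u (hSB1 hSB u hx)]; norm_num
      · refine ⟨hxy, ?_⟩
        rw [T₁.symm]
        rcases hx with ⟨rfl, hSA⟩ | ⟨rfl, hSB⟩
        · rw [ha0 v (hSA1 hSA v hy)]; norm_num
        · rw [hb0 v (hSB1 hSB v hy)]; norm_num
      · rcases hx with ⟨rfl, hSA⟩ | ⟨rfl, hSB⟩ <;> rcases hy with ⟨rfl, hSA'⟩ | ⟨rfl, hSB'⟩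
        · exact absurd rfl hxy
        · exact ⟨hxy, hABm⟩
        · exact ⟨hxy, by rw [T₁.symm]; exact hABm⟩
        · exact absurd rfl hxy
    have hdisj : Disjoint {x : ↥(A1 ∪ B1 ∪ C1) ⊕ M | Sum.elim (fun u => u.1 ∈ K)
        (fun m => (m = am ∧ (K ∩ A2).Nonempty) ∨ (m = bm ∧ (K ∩ B2).Nonempty)) x}
        {x : ↥(A1 ∪ B1 ∪ C1) ⊕ M | Sum.elim (fun u => u.1 ∈ S)
        (fun m => (m = am ∧ (S ∩ A2).Nonempty) ∨ (m = bm ∧ (S ∩ B2).Nonempty)) x} := by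
      rw [Set.disjoint_left]
      intro x hx hy
      rcases x with u | m <;>
        simp only [Set.mem_setOf_eq, Sum.elim_inl, Sum.elim_inr] at hx hy
      · exact Set.disjoint_left.mp hKS hx hy
      · rcases hx with ⟨rfl, hKA⟩ | ⟨rfl, hKB⟩ <;> rcases hy with ⟨hm, hSA⟩ | ⟨hm, hSB⟩
        · exact hKSA hKA hSA
        · exact hab hm
        · exact hab hm.symm
        · exact hKSB hKB hSB
    obtain ⟨c, hcF, hKc, hSc⟩ := hF.2 _ _ hK' hS' hdisj
    have hcut := hF.1 c hcF
    refine ⟨liftCut (A1 ∪ B1 ∪ C1) A2 B2 am bm c, Finset.mem_image_of_mem _ hcF, ?_, ?_⟩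
    · intro k hk
      have hku : k ∈ (A1 ∪ B1 ∪ C1) ∪ (A2 ∪ B2 ∪ C2) := huniv ▸ Set.mem_univ k
      rcases hku with h1 | h2
      · exact Or.inl ⟨h1, hKc (show (Sum.inl (⟨k, h1⟩ : ↥(A1 ∪ B1 ∪ C1)) : ↥(A1 ∪ B1 ∪ C1) ⊕ M) ∈ _ from hk)⟩
      · rcases h2 with (hA | hB) | hC
        · exact Or.inr (Or.inl ⟨hA, hKc (show Sum.inr am ∈ _ from Or.inl ⟨rfl, k, hk, hA⟩)⟩)
        · exact Or.inr (Or.inr ⟨hB, hKc (show Sum.inr bm ∈ _ from Or.inr ⟨rfl, k, hk, hB⟩)⟩)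
        · exact absurd (Set.eq_empty_iff_forall_notMem.mp hKC2 k ⟨hk, hC⟩) (by simp)
    · intro s hs
      simp only [liftCut, Set.mem_compl_iff, Set.mem_setOf_eq]
      rintro (⟨h1, hin⟩ | ⟨hA, hin⟩ | ⟨hB, hin⟩)
      · exact Set.disjoint_left.mp hcut.1 hin (hSc (show (Sum.inl (⟨s, h1⟩ : ↥(A1 ∪ B1 ∪ C1)) : ↥(A1 ∪ B1 ∪ C1) ⊕ M) ∈ _ from hs))
      · exact Set.disjoint_left.mp hcut.1 hin (hSc (show Sum.inr am ∈ _ from Or.inl ⟨rfl, s, hs, hA⟩))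
      · exact Set.disjoint_left.mp hcut.1 hin (hSc (show Sum.inr bm ∈ _ from Or.inr ⟨rfl, s, hs, hB⟩))

end Trigraph
namespace Trigraph

variable {V : Type}

lemma odd_ha1 (T : Trigraph V) (A B C : Set V) (u : ↥(A ∪ B ∪ C)) (h : u.1 ∈ A) :
    (T.oddBlock A B C).theta (Sum.inl u) (Sum.inr 0) = 1 := by
  show markTheta2 A B u.1 0 = 1
  simp [markTheta2, h]

lemma odd_ha0 (T : Trigraph V) (A B C : Set V) (u : ↥(A ∪ B ∪ C)) (h : u.1 ∉ A) :
    (T.oddBlock A B C).theta (Sum.inl u) (Sum.inr 0) = -1 := by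
  show markTheta2 A B u.1 0 = -1
  simp [markTheta2, h]

lemma odd_hb1 (T : Trigraph V) (A B C : Set V) (u : ↥(A ∪ B ∪ C)) (h : u.1 ∈ B) :
    (T.oddBlock A B C).theta (Sum.inl u) (Sum.inr 1) = 1 := by
  show markTheta2 A B u.1 1 = 1
  simp [markTheta2, h]

lemma odd_hb0 (T : Trigraph V) (A B C : Set V) (u : ↥(A ∪ B ∪ C)) (h : u.1 ∉ B) :
    (T.oddBlock A B C).theta (Sum.inl u) (Sum.inr 1) = -1 := by
  show markTheta2 A B u.1 1 = -1
  simp [markTheta2, h]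

lemma odd_hab (T : Trigraph V) (A B C : Set V) :
    (T.oddBlock A B C).theta (Sum.inr 0) (Sum.inr 1) ≤ 0 := by
  show (if (0 : Fin 2) = 1 then (1 : ℤ) else 0) ≤ 0
  norm_num

lemma even_ha1 (T : Trigraph V) (A B C : Set V) (u : ↥(A ∪ B ∪ C)) (h : u.1 ∈ A) :
    (T.evenBlock A B C).theta (Sum.inl u) (Sum.inr 0) = 1 := by
  show markTheta3 A B u.1 0 = 1
  simp [markTheta3, h]

lemma even_ha0 (T : Trigraph V) (A B C : Set V) (u : ↥(A ∪ B ∪ C)) (h : u.1 ∉ A) :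
    (T.evenBlock A B C).theta (Sum.inl u) (Sum.inr 0) = -1 := by
  show markTheta3 A B u.1 0 = -1
  simp [markTheta3, h]

lemma even_hb1 (T : Trigraph V) (A B C : Set V) (u : ↥(A ∪ B ∪ C)) (h : u.1 ∈ B) :
    (T.evenBlock A B C).theta (Sum.inl u) (Sum.inr 1) = 1 := by
  show markTheta3 A B u.1 1 = 1
  simp [markTheta3, h]

lemma even_hb0 (T : Trigraph V) (A B C : Set V) (u : ↥(A ∪ B ∪ C)) (h : u.1 ∉ B) :
    (T.evenBlock A B C).theta (Sum.inl u) (Sum.inr 1) = -1 := by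
  show markTheta3 A B u.1 1 = -1
  simp [markTheta3, h]

lemma even_hab (T : Trigraph V) (A B C : Set V) :
    (T.evenBlock A B C).theta (Sum.inr 0) (Sum.inr 1) ≤ 0 := by
  show finTheta3 0 1 ≤ 0
  decide

end Trigraph
/-- If a trigraph admits a 2-join with the given split and the blocks of
decomposition (odd or even, on each side) admit CS-separators of sizes k1 and k2, then
the trigraph admits a CS-separator of size at most k1 + k2. -/
theorem stmt_9 {V : Type} [Fintype V] (T : Trigraph V) (A1 B1 C1 A2 B2 C2 : Set V)
    (hsplit : T.IsTwoJoinSplit A1 B1 C1 A2 B2 C2) (k1 k2 : ℕ)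
    (h1 : (∃ F, (Trigraph.oddBlock T A1 B1 C1).IsCSSeparator F ∧ F.card = k1) ∨
          (∃ F, (Trigraph.evenBlock T A1 B1 C1).IsCSSeparator F ∧ F.card = k1))
    (h2 : (∃ F, (Trigraph.oddBlock T A2 B2 C2).IsCSSeparator F ∧ F.card = k2) ∨
          (∃ F, (Trigraph.evenBlock T A2 B2 C2).IsCSSeparator F ∧ F.card = k2)) :
    ∃ F : Finset (Set V × Set V), T.IsCSSeparator F ∧ F.card ≤ k1 + k2 := by
  classical
  obtain ⟨-, -, -, -, hpw, huniv, -, hadjA, hadjB, hanti, -⟩ := hsplit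
  rcases hpw with _ | ⟨hp1, _ | ⟨hp2, _ | ⟨hp3, _ | ⟨hp4, _ | ⟨hp5, -⟩⟩⟩⟩⟩
  have hA1B1 : Disjoint A1 B1 := hp1 B1 (by simp)
  have hA1C1 : Disjoint A1 C1 := hp1 C1 (by simp)
  have hA1A2 : Disjoint A1 A2 := hp1 A2 (by simp)
  have hA1B2 : Disjoint A1 B2 := hp1 B2 (by simp)
  have hA1C2 : Disjoint A1 C2 := hp1 C2 (by simp)
  have hB1C1 : Disjoint B1 C1 := hp2 C1 (by simp)
  have hB1A2 : Disjoint B1 A2 := hp2 A2 (by simp)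
  have hB1B2 : Disjoint B1 B2 := hp2 B2 (by simp)
  have hB1C2 : Disjoint B1 C2 := hp2 C2 (by simp)
  have hC1A2 : Disjoint C1 A2 := hp3 A2 (by simp)
  have hC1B2 : Disjoint C1 B2 := hp3 B2 (by simp)
  have hC1C2 : Disjoint C1 C2 := hp3 C2 (by simp)
  have hA2B2 : Disjoint A2 B2 := hp4 B2 (by simp)
  have hA2C2 : Disjoint A2 C2 := hp4 C2 (by simp)
  have hB2C2 : Disjoint B2 C2 := hp5 C2 (by simp)
  have hdX : Disjoint (A1 ∪ B1 ∪ C1) (A2 ∪ B2 ∪ C2) := by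
    rw [Set.disjoint_left]
    rintro a ((h | h) | h) ((g | g) | g) <;>
      first
        | exact Set.disjoint_left.mp hA1A2 h g
        | exact Set.disjoint_left.mp hA1B2 h g
        | exact Set.disjoint_left.mp hA1C2 h g
        | exact Set.disjoint_left.mp hB1A2 h g
        | exact Set.disjoint_left.mp hB1B2 h g
        | exact Set.disjoint_left.mp hB1C2 h g
        | exact Set.disjoint_left.mp hC1A2 h g
        | exact Set.disjoint_left.mp hC1B2 h g
        | exact Set.disjoint_left.mp hC1C2 h g
  -- theta facts for side 1
  have hadjA1 : ∀ u ∈ A1, ∀ v ∈ A2, T.theta u v = 1 := fun u hu v hv => (hadjA u hu v hv).2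
  have hadjB1 : ∀ u ∈ B1, ∀ v ∈ B2, T.theta u v = 1 := fun u hu v hv => (hadjB u hu v hv).2
  have hantiA1 : ∀ u ∈ A1 ∪ B1 ∪ C1, ∀ v ∈ A2, u ∉ A1 → T.theta u v = -1 :=
    fun u hu v hv h => (hanti u hu v (Or.inl (Or.inl hv)) (fun hc => h hc.1)
      (fun hc => Set.disjoint_left.mp hA2B2 hv hc.2)).2
  have hantiB1 : ∀ u ∈ A1 ∪ B1 ∪ C1, ∀ v ∈ B2, u ∉ B1 → T.theta u v = -1 :=
    fun u hu v hv h => (hanti u hu v (Or.inl (Or.inr hv)) (fun hc => Set.disjoint_right.mp hA2B2 hv hc.2)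
      (fun hc => h hc.1)).2
  -- theta facts for side 2
  have huniv2 : (A2 ∪ B2 ∪ C2) ∪ (A1 ∪ B1 ∪ C1) = Set.univ := by
    rw [Set.union_comm]; exact huniv
  have hd1' : Disjoint (A2 ∪ B2 ∪ C2) A1 :=
    hdX.symm.mono_right (fun x hx => Or.inl (Or.inl hx))
  have hd2' : Disjoint (A2 ∪ B2 ∪ C2) B1 :=
    hdX.symm.mono_right (fun x hx => Or.inl (Or.inr hx))
  have hadjA2 : ∀ u ∈ A2, ∀ v ∈ A1, T.theta u v = 1 :=
    fun u hu v hv => by rw [T.symm]; exact (hadjA v hv u hu).2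
  have hadjB2 : ∀ u ∈ B2, ∀ v ∈ B1, T.theta u v = 1 :=
    fun u hu v hv => by rw [T.symm]; exact (hadjB v hv u hu).2
  have hantiA2 : ∀ u ∈ A2 ∪ B2 ∪ C2, ∀ v ∈ A1, u ∉ A2 → T.theta u v = -1 := by
    intro u hu v hv h
    rw [T.symm]
    exact (hanti v (Or.inl (Or.inl hv)) u hu (fun hc => h hc.2)
      (fun hc => Set.disjoint_left.mp hA1B1 hv hc.1)).2
  have hantiB2 : ∀ u ∈ A2 ∪ B2 ∪ C2, ∀ v ∈ B1, u ∉ B2 → T.theta u v = -1 := by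
    intro u hu v hv h
    rw [T.symm]
    exact (hanti v (Or.inl (Or.inr hv)) u hu (fun hc => Set.disjoint_right.mp hA1B1 hv hc.1)
      (fun hc => h hc.2)).2
  -- side 1 family
  have key1 : ∃ F' : Finset (Set V × Set V), F'.card ≤ k1 ∧ (∀ c ∈ F', Trigraph.IsCut c) ∧
      ∀ K S : Set V, T.IsClique K → T.IsStable S → Disjoint K S →
        K ∩ C2 = ∅ → ¬((K ∩ A2).Nonempty ∧ (K ∩ B2).Nonempty) →
        ((K ∩ A2).Nonempty → ¬(S ∩ A2).Nonempty) →
        ((K ∩ B2).Nonempty → ¬(S ∩ B2).Nonempty) →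
        ∃ c ∈ F', K ⊆ c.1 ∧ S ⊆ c.2 := by
    have hd1 : Disjoint (A1 ∪ B1 ∪ C1) A2 := hdX.mono_right (fun x hx => Or.inl (Or.inl hx))
    have hd2 : Disjoint (A1 ∪ B1 ∪ C1) B2 := hdX.mono_right (fun x hx => Or.inl (Or.inr hx))
    rcases h1 with ⟨F1, hF1, hcard1⟩ | ⟨F1, hF1, hcard1⟩
    · obtain ⟨F', h⟩ := Trigraph.side_lemma T A1 B1 C1 A2 B2 C2 huniv hd1 hd2
        hadjA1 hantiA1 hadjB1 hantiB1 (0 : Fin 2) 1 (by decide) _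
        (fun u v => rfl) (T.odd_ha1 A1 B1 C1) (T.odd_ha0 A1 B1 C1)
        (T.odd_hb1 A1 B1 C1) (T.odd_hb0 A1 B1 C1) (T.odd_hab A1 B1 C1) F1 hF1
      exact ⟨F', hcard1 ▸ h.1, h.2⟩
    · obtain ⟨F', h⟩ := Trigraph.side_lemma T A1 B1 C1 A2 B2 C2 huniv hd1 hd2
        hadjA1 hantiA1 hadjB1 hantiB1 (0 : Fin 3) 1 (by decide) _
        (fun u v => rfl) (T.even_ha1 A1 B1 C1) (T.even_ha0 A1 B1 C1)
        (T.even_hb1 A1 B1 C1) (T.even_hb0 A1 B1 C1) (T.even_hab A1 B1 C1) F1 hF1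
      exact ⟨F', hcard1 ▸ h.1, h.2⟩
  have key2 : ∃ F' : Finset (Set V × Set V), F'.card ≤ k2 ∧ (∀ c ∈ F', Trigraph.IsCut c) ∧
      ∀ K S : Set V, T.IsClique K → T.IsStable S → Disjoint K S →
        K ∩ C1 = ∅ → ¬((K ∩ A1).Nonempty ∧ (K ∩ B1).Nonempty) →
        ((K ∩ A1).Nonempty → ¬(S ∩ A1).Nonempty) →
        ((K ∩ B1).Nonempty → ¬(S ∩ B1).Nonempty) →
        ∃ c ∈ F', K ⊆ c.1 ∧ S ⊆ c.2 := by
    rcases h2 with ⟨F2, hF2, hcard2⟩ | ⟨F2, hF2, hcard2⟩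
    · obtain ⟨F', h⟩ := Trigraph.side_lemma T A2 B2 C2 A1 B1 C1 huniv2 hd1' hd2'
        hadjA2 hantiA2 hadjB2 hantiB2 (0 : Fin 2) 1 (by decide) _
        (fun u v => rfl) (T.odd_ha1 A2 B2 C2) (T.odd_ha0 A2 B2 C2)
        (T.odd_hb1 A2 B2 C2) (T.odd_hb0 A2 B2 C2) (T.odd_hab A2 B2 C2) F2 hF2
      exact ⟨F', hcard2 ▸ h.1, h.2⟩
    · obtain ⟨F', h⟩ := Trigraph.side_lemma T A2 B2 C2 A1 B1 C1 huniv2 hd1' hd2'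
        hadjA2 hantiA2 hadjB2 hantiB2 (0 : Fin 3) 1 (by decide) _
        (fun u v => rfl) (T.even_ha1 A2 B2 C2) (T.even_ha0 A2 B2 C2)
        (T.even_hb1 A2 B2 C2) (T.even_hb0 A2 B2 C2) (T.even_hab A2 B2 C2) F2 hF2
      exact ⟨F', hcard2 ▸ h.1, h.2⟩
  obtain ⟨F1', hc1, hcut1, hsep1⟩ := key1
  obtain ⟨F2', hc2, hcut2, hsep2⟩ := key2
  refine ⟨F1' ∪ F2', ⟨?_, ?_⟩, le_trans (Finset.card_union_le _ _) (add_le_add hc1 hc2)⟩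
  · intro c hc
    rcases Finset.mem_union.mp hc with h | h
    · exact hcut1 c h
    · exact hcut2 c h
  · intro K S hK hS hd
    -- classification of cross adjacencies
    have hclass : ∀ u ∈ A1 ∪ B1 ∪ C1, ∀ v ∈ A2 ∪ B2 ∪ C2, 0 ≤ T.theta u v →
        (u ∈ A1 ∧ v ∈ A2) ∨ (u ∈ B1 ∧ v ∈ B2) := by
      intro u hu v hv hθ
      by_contra h
      rw [not_or] at h
      have := (hanti u hu v hv h.1 h.2).2
      omega
    have hSAe : (S ∩ A1).Nonempty → (S ∩ A2).Nonempty → False := by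
      rintro ⟨x, hxS, hxA1⟩ ⟨y, hyS, hyA2⟩
      have hne : x ≠ y := fun e => Set.disjoint_left.mp hA1A2 hxA1 (e ▸ hyA2)
      have h1 := (hS hxS hyS hne).2
      have h2 := hadjA1 x hxA1 y hyA2
      omega
    have hSBe : (S ∩ B1).Nonempty → (S ∩ B2).Nonempty → False := by
      rintro ⟨x, hxS, hxB1⟩ ⟨y, hyS, hyB2⟩
      have hne : x ≠ y := fun e => Set.disjoint_left.mp hB1B2 hxB1 (e ▸ hyB2)
      have h1 := (hS hxS hyS hne).2
      have h2 := hadjB1 x hxB1 y hyB2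
      omega
    by_cases hKX2 : (K ∩ (A2 ∪ B2 ∪ C2)).Nonempty
    · by_cases hKX1 : (K ∩ (A1 ∪ B1 ∪ C1)).Nonempty
      · obtain ⟨v, hvK, hvX2⟩ := hKX2
        obtain ⟨u, huK, huX1⟩ := hKX1
        have hne : u ≠ v := fun e => Set.disjoint_left.mp hdX huX1 (e ▸ hvX2)
        rcases hclass u huX1 v hvX2 (hK huK hvK hne).2 with ⟨huA1, hvA2⟩ | ⟨huB1, hvB2⟩
        · -- A case
          have hKX1A : ∀ w, w ∈ K → w ∈ A1 ∪ B1 ∪ C1 → w ∈ A1 := by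
            intro w hwK hwX1
            have hnew : w ≠ v := fun e => Set.disjoint_left.mp hdX hwX1 (e ▸ hvX2)
            rcases hclass w hwX1 v hvX2 (hK hwK hvK hnew).2 with ⟨h, -⟩ | ⟨-, hb⟩
            · exact h
            · exact absurd hb (Set.disjoint_left.mp hA2B2 hvA2)
          have hKX2A : ∀ w, w ∈ K → w ∈ A2 ∪ B2 ∪ C2 → w ∈ A2 := by
            intro w hwK hwX2
            have hnew : u ≠ w := fun e => Set.disjoint_left.mp hdX huX1 (e ▸ hwX2)
            rcases hclass u huX1 w hwX2 (hK huK hwK hnew).2 with ⟨-, h⟩ | ⟨hb, -⟩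
            · exact h
            · exact absurd hb (Set.disjoint_left.mp hA1B1 huA1)
          by_cases hSA2 : (S ∩ A2).Nonempty
          · -- use side 2
            have hKC1 : K ∩ C1 = ∅ := by
              rw [Set.eq_empty_iff_forall_notMem]
              rintro w ⟨hwK, hwC⟩
              exact Set.disjoint_left.mp hA1C1 (hKX1A w hwK (Or.inr hwC)) hwC
            have hKB1e : ¬(K ∩ B1).Nonempty := by
              rintro ⟨w, hwK, hwB⟩
              exact Set.disjoint_left.mp hA1B1 (hKX1A w hwK (Or.inl (Or.inr hwB))) hwB
            obtain ⟨c, hcF, hsub⟩ := hsep2 K S hK hS hd hKC1 (fun h => hKB1e h.2)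
              (fun _ hne' => hSAe hne' hSA2) (fun h => absurd h hKB1e)
            exact ⟨c, Finset.mem_union_right _ hcF, hsub⟩
          · -- use side 1
            have hKC2 : K ∩ C2 = ∅ := by
              rw [Set.eq_empty_iff_forall_notMem]
              rintro w ⟨hwK, hwC⟩
              exact Set.disjoint_left.mp hA2C2 (hKX2A w hwK (Or.inr hwC)) hwC
            have hKB2e : ¬(K ∩ B2).Nonempty := by
              rintro ⟨w, hwK, hwB⟩
              exact Set.disjoint_left.mp hA2B2 (hKX2A w hwK (Or.inl (Or.inr hwB))) hwB
            obtain ⟨c, hcF, hsub⟩ := hsep1 K S hK hS hd hKC2 (fun h => hKB2e h.2)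
              (fun _ => hSA2) (fun h => absurd h hKB2e)
            exact ⟨c, Finset.mem_union_left _ hcF, hsub⟩
        · -- B case
          have hKX1B : ∀ w, w ∈ K → w ∈ A1 ∪ B1 ∪ C1 → w ∈ B1 := by
            intro w hwK hwX1
            have hnew : w ≠ v := fun e => Set.disjoint_left.mp hdX hwX1 (e ▸ hvX2)
            rcases hclass w hwX1 v hvX2 (hK hwK hvK hnew).2 with ⟨-, ha⟩ | ⟨h, -⟩
            · exact absurd ha (Set.disjoint_right.mp hA2B2 hvB2)
            · exact h
          have hKX2B : ∀ w, w ∈ K → w ∈ A2 ∪ B2 ∪ C2 → w ∈ B2 := by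
            intro w hwK hwX2
            have hnew : u ≠ w := fun e => Set.disjoint_left.mp hdX huX1 (e ▸ hwX2)
            rcases hclass u huX1 w hwX2 (hK huK hwK hnew).2 with ⟨ha, -⟩ | ⟨-, h⟩
            · exact absurd ha (Set.disjoint_right.mp hA1B1 huB1)
            · exact h
          by_cases hSB2 : (S ∩ B2).Nonempty
          · -- use side 2
            have hKC1 : K ∩ C1 = ∅ := by
              rw [Set.eq_empty_iff_forall_notMem]
              rintro w ⟨hwK, hwC⟩
              exact Set.disjoint_left.mp hB1C1 (hKX1B w hwK (Or.inr hwC)) hwC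
            have hKA1e : ¬(K ∩ A1).Nonempty := by
              rintro ⟨w, hwK, hwA⟩
              exact Set.disjoint_right.mp hA1B1 (hKX1B w hwK (Or.inl (Or.inl hwA))) hwA
            obtain ⟨c, hcF, hsub⟩ := hsep2 K S hK hS hd hKC1 (fun h => hKA1e h.1)
              (fun h => absurd h hKA1e) (fun _ hne' => hSBe hne' hSB2)
            exact ⟨c, Finset.mem_union_right _ hcF, hsub⟩
          · -- use side 1
            have hKC2 : K ∩ C2 = ∅ := by
              rw [Set.eq_empty_iff_forall_notMem]
              rintro w ⟨hwK, hwC⟩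
              exact Set.disjoint_left.mp hB2C2 (hKX2B w hwK (Or.inr hwC)) hwC
            have hKA2e : ¬(K ∩ A2).Nonempty := by
              rintro ⟨w, hwK, hwA⟩
              exact Set.disjoint_right.mp hA2B2 (hKX2B w hwK (Or.inl (Or.inl hwA))) hwA
            obtain ⟨c, hcF, hsub⟩ := hsep1 K S hK hS hd hKC2 (fun h => hKA2e h.1)
              (fun h => absurd h hKA2e) (fun _ => hSB2)
            exact ⟨c, Finset.mem_union_left _ hcF, hsub⟩
      · -- K avoids X1 entirely: use side 2
        have hKC1 : K ∩ C1 = ∅ := by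
          rw [Set.eq_empty_iff_forall_notMem]
          rintro w ⟨hwK, hwC⟩
          exact hKX1 ⟨w, hwK, Or.inr hwC⟩
        have hKA1e : ¬(K ∩ A1).Nonempty := by
          rintro ⟨w, hwK, hwA⟩
          exact hKX1 ⟨w, hwK, Or.inl (Or.inl hwA)⟩
        have hKB1e : ¬(K ∩ B1).Nonempty := by
          rintro ⟨w, hwK, hwB⟩
          exact hKX1 ⟨w, hwK, Or.inl (Or.inr hwB)⟩
        obtain ⟨c, hcF, hsub⟩ := hsep2 K S hK hS hd hKC1 (fun h => hKA1e h.1)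
          (fun h => absurd h hKA1e) (fun h => absurd h hKB1e)
        exact ⟨c, Finset.mem_union_right _ hcF, hsub⟩
    · -- K avoids X2 entirely: use side 1
      have hKC2 : K ∩ C2 = ∅ := by
        rw [Set.eq_empty_iff_forall_notMem]
        rintro w ⟨hwK, hwC⟩
        exact hKX2 ⟨w, hwK, Or.inr hwC⟩
      have hKA2e : ¬(K ∩ A2).Nonempty := by
        rintro ⟨w, hwK, hwA⟩
        exact hKX2 ⟨w, hwK, Or.inl (Or.inl hwA)⟩
      have hKB2e : ¬(K ∩ B2).Nonempty := by
        rintro ⟨w, hwK, hwB⟩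
        exact hKX2 ⟨w, hwK, Or.inl (Or.inr hwB)⟩
      obtain ⟨c, hcF, hsub⟩ := hsep1 K S hK hS hd hKC2 (fun h => hKA2e h.1)
        (fun h => absurd h hKA2e) (fun h => absurd h hKB2e)
      exact ⟨c, Finset.mem_union_left _ hcF, hsub⟩
end

section
/- Let T be a Berge trigraph and (A1, B1, C1, A2, B2, C2) a split of a 2-join of T. Then for all i, j ∈ {1, 2}, any path of T with one end in Ai, the other end in Bi, and all internal vertices in Ci, and any path of T with one end in Aj, the other end in Bj, and all internal vertices in Cj, have lengths of the same parity. -/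
namespace Trigraph

/-- A path of length `k` of `T` with one end in `A`, the other end in `B` and all internal
vertices in `C`. -/
def EndsPath (T : Trigraph V) (A B C : Set V) (k : ℕ) (f : Fin (k + 1) → V) : Prop :=
  T.IsPath k f ∧ f 0 ∈ A ∧ f (Fin.last k) ∈ B ∧
  ∀ i, i ≠ 0 → i ≠ Fin.last k → f i ∈ C

end Trigraph

namespace Trigraph
variable {V : Type}

/-- auxiliary: graph realizing T with switchable edges only along a given cycle-chain -/
def pathGraph (T : Trigraph V) (c : ℕ → V) (M : ℕ) : SimpleGraph V where
  Adj u v := T.StrongAdj u v ∨ (T.Switchable u v ∧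
    ∃ m, m ≤ M ∧ ((u = c m ∧ v = c (m+1)) ∨ (v = c m ∧ u = c (m+1))))
  symm := by
    refine ⟨?_⟩
    rintro u v (⟨hne, h1⟩ | ⟨⟨hne, h0⟩, m, hm, hor⟩)
    · exact Or.inl ⟨hne.symm, by rw [T.symm v u]; exact h1⟩
    · exact Or.inr ⟨⟨hne.symm, by rw [T.symm v u]; exact h0⟩, m, hm, hor.symm⟩
  loopless := by
    refine ⟨?_⟩
    rintro v (⟨hne, _⟩ | ⟨⟨hne, _⟩, _⟩) <;> exact hne rfl

lemma pathGraph_isRealization (T : Trigraph V) (c : ℕ → V) (M : ℕ) :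
    T.IsRealization (T.pathGraph c M) := by
  constructor
  · intro u v h; exact Or.inl h
  · rintro u v ⟨hne, hm1⟩ (⟨_, h1⟩ | ⟨⟨_, h0⟩, _⟩) <;> omega

/-- build a walk from a chain of adjacent vertices -/
lemma exists_walk_of_chain {G : SimpleGraph V} :
    ∀ (L : ℕ) (g : ℕ → V), (∀ s, s < L → G.Adj (g s) (g (s+1))) →
      ∃ w : G.Walk (g 0) (g L), w.length = L := by
  intro L
  induction L with
  | zero => intro g _; exact ⟨SimpleGraph.Walk.nil, rfl⟩
  | succ L ih =>
    intro g hg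
    obtain ⟨w, hw⟩ := ih (fun s => g (s+1)) (fun s hs => hg (s+1) (by omega))
    exact ⟨SimpleGraph.Walk.cons (hg 0 (by omega)) w, by simp [hw]⟩

lemma exists_walk_of_chain' {G : SimpleGraph V} (L : ℕ) (g : ℕ → V)
    (hc : ∀ s, s < L → G.Adj (g s) (g (s+1))) (x y : V) (hx : g 0 = x) (hy : g L = y) :
    ∃ w : G.Walk x y, w.length = L := by
  subst hx hy; exact exists_walk_of_chain L g hc

/-- transfer reachability between induced subgraphs -/
lemma reach_induce (G : SimpleGraph V) {X Y : Set V} :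
    ∀ {p q : ↥X} (w : (G.induce X).Walk p q), (∀ v ∈ w.support, ↑v ∈ Y) →
    ∀ (hp : ↑p ∈ Y) (hq : ↑q ∈ Y), (G.induce Y).Reachable ⟨↑p, hp⟩ ⟨↑q, hq⟩ := by
  intro p q w
  induction w with
  | nil => intro _ hp hq; exact SimpleGraph.Reachable.refl _
  | @cons u v q h w ih =>
    intro hsupp hp hq
    have hv : ↑v ∈ Y := hsupp v (by simp [SimpleGraph.Walk.support_cons])
    have hadj : (G.induce Y).Adj ⟨↑u, hp⟩ ⟨↑v, hv⟩ := h
    exact (hadj.reachable).trans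
      (ih (fun x hx => hsupp x (by simp [SimpleGraph.Walk.support_cons, hx])) hv hq)

lemma exists_endsPath (T : Trigraph V) (A B C : Set V) (hA : A.Nonempty)
    (hdAB : Disjoint A B)
    (hcomp : ∀ K, GIsComponentOf T.fullRealization (A ∪ B ∪ C) K →
      (K ∩ A).Nonempty ∧ (K ∩ B).Nonempty) :
    ∃ (k : ℕ) (f : Fin (k+1) → V), T.EndsPath A B C k f := by
  classical
  set X : Set V := A ∪ B ∪ C with hX
  set G : SimpleGraph V := T.fullRealization with hG
  set H : SimpleGraph ↥X := G.induce X with hH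
  obtain ⟨a, ha⟩ := hA
  have haX : a ∈ X := Or.inl (Or.inl ha)
  set a' : ↥X := ⟨a, haX⟩ with ha'
  set cc := H.connectedComponentMk a' with hcc
  set K : Set V := Subtype.val '' cc.supp with hK
  -- K is a component
  have hKsub : K ⊆ X := by rintro x ⟨y, _, rfl⟩; exact y.2
  have haK : a ∈ K := ⟨a', by simp [SimpleGraph.ConnectedComponent.mem_supp_iff, hcc], rfl⟩
  have hmemK : ∀ (x : ↥X), (↑x ∈ K ↔ H.Reachable a' x) := by
    intro x
    constructor
    · rintro ⟨y, hy, hxy⟩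
      have : y = x := Subtype.ext hxy
      subst this
      rw [SimpleGraph.ConnectedComponent.mem_supp_iff] at hy
      exact (SimpleGraph.ConnectedComponent.eq.mp hy).symm
    · intro h
      refine ⟨x, ?_, rfl⟩
      rw [SimpleGraph.ConnectedComponent.mem_supp_iff]
      exact SimpleGraph.ConnectedComponent.eq.mpr h.symm
  have hKcomp : GIsComponentOf G X K := by
    refine ⟨hKsub, ⟨a, haK⟩, ?_, ?_⟩
    · rw [SimpleGraph.connected_iff]
      refine ⟨?_, ⟨⟨a, haK⟩⟩⟩
      rintro ⟨x, hx⟩ ⟨y, hy⟩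
      obtain hrx := (hmemK ⟨x, hKsub hx⟩).mp hx
      obtain hry := (hmemK ⟨y, hKsub hy⟩).mp hy
      obtain ⟨w⟩ := hrx.symm.trans hry
      have hsupp : ∀ v ∈ w.support, ↑v ∈ K := by
        intro v hv
        have : H.Reachable ⟨x, hKsub hx⟩ v := (w.takeUntil v hv).reachable
        exact (hmemK v).mpr (hrx.trans this)
      exact reach_induce G w hsupp hx hy
    · intro D hKD hDX hDconn
      apply Set.Subset.antisymm _ hKD
      intro d hd
      have haD : a ∈ D := hKD haK
      obtain ⟨w⟩ := hDconn ⟨a, haD⟩ ⟨d, hd⟩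
      have := reach_induce G w (fun v _ => hDX v.2) (hDX haD) (hDX hd)
      exact (hmemK ⟨d, hDX hd⟩).mpr this
  obtain ⟨⟨_, _⟩, b, hbK, hbB⟩ := hcomp K hKcomp
  have hbX : b ∈ X := hKsub hbK
  -- set of achievable walk lengths from A to B inside X
  set S : Set ℕ := {L : ℕ | ∃ (p q : ↥X), ↑p ∈ A ∧ ↑q ∈ B ∧
    ∃ w : H.Walk p q, w.length = L} with hS
  have hSne : ∃ L, L ∈ S := by
    obtain ⟨w⟩ := (hmemK ⟨b, hbX⟩).mp hbK
    exact ⟨w.length, a', ⟨b, hbX⟩, ha, hbB, w, rfl⟩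
  set m : ℕ := Nat.find hSne with hm
  obtain ⟨p, q, hpA, hqB, w, hwlen⟩ : m ∈ S := Nat.find_spec hSne
  have hmin : ∀ L, L < m → L ∉ S := fun L hL => Nat.find_min hSne hL
  -- abbreviation
  set g : ℕ → ↥X := w.getVert with hg
  have hg0 : g 0 = p := w.getVert_zero
  have hgm : g m = q := by rw [hg, ← hwlen]; exact w.getVert_length
  have hadjg : ∀ s, s < m → H.Adj (g s) (g (s+1)) := by
    intro s hs; exact w.adj_getVert_succ (by omega)
  -- shorter-walk contradictions
  have hspliceA : ∀ i, 0 < i → i < m → ↑(g i) ∉ A := by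
    intro i hi0 him hginA
    apply hmin (m - i) (by omega)
    exact ⟨g i, q, hginA, hqB, exists_walk_of_chain' (G := H) (m - i) (fun s => g (s + i))
      (fun s hs => by
        show H.Adj (g (s + i)) (g (s + 1 + i))
        rw [show s + 1 + i = s + i + 1 by omega]
        exact hadjg (s + i) (by omega))
      (g i) q (by show g (0 + i) = g i; rw [Nat.zero_add])
      (by show g (m - i + i) = q; rw [show m - i + i = m by omega]; exact hgm)⟩
  have hspliceB : ∀ i, 0 < i → i < m → ↑(g i) ∉ B := by
    intro i hi0 him hginB
    apply hmin i (by omega)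
    exact ⟨p, g i, hpA, hginB, exists_walk_of_chain' (G := H) i g
      (fun s hs => hadjg s (by omega)) p (g i) hg0 rfl⟩
  have hm1 : 1 ≤ m := by
    rcases Nat.eq_zero_or_pos m with h0 | h; swap; · exact h
    exfalso
    have : p = q := by rw [← hg0, ← hgm, h0]
    exact Set.disjoint_left.mp hdAB hpA (this ▸ hqB)
  -- injectivity
  have hinjg : ∀ i j, i < j → j ≤ m → g i ≠ g j := by
    intro i j hij hjm heq
    rcases Nat.eq_or_lt_of_le hjm with hjeq | hjlt
    · subst hjeq
      rcases Nat.eq_zero_or_pos i with h0 | hpos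
      · subst h0
        rw [hg0, hgm] at heq
        exact Set.disjoint_left.mp hdAB hpA (heq ▸ hqB)
      · exact hspliceB i hpos hij (by rw [heq, hgm]; exact hqB)
    · apply hmin (m - (j - i)) (by omega)
      refine ⟨p, q, hpA, hqB, exists_walk_of_chain' (G := H) (m - (j - i))
        (fun s => if s ≤ i then g s else g (s + (j - i))) ?_ p q ?_ ?_⟩
      · intro s hs
        show H.Adj (if s ≤ i then g s else g (s + (j - i)))
          (if s + 1 ≤ i then g (s + 1) else g (s + 1 + (j - i)))
        split_ifs with h1 h2 h2
        · exact hadjg s (by omega)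
        · have hsi : s = i := by omega
          subst hsi
          rw [heq, show s + 1 + (j - s) = j + 1 by omega]
          exact hadjg j (by omega)
        · omega
        · rw [show s + 1 + (j - i) = s + (j - i) + 1 by omega]
          exact hadjg (s + (j - i)) (by omega)
      · show (if (0:ℕ) ≤ i then g 0 else g (0 + (j - i))) = p
        rw [if_pos (Nat.zero_le i)]; exact hg0
      · show (if m - (j - i) ≤ i then g (m - (j - i)) else g (m - (j - i) + (j - i))) = q
        rw [if_neg (by omega : ¬ m - (j - i) ≤ i), show m - (j - i) + (j - i) = m by omega]
        exact hgm
  -- non-consecutive pairs are non-adjacent in H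
  have hnonadj : ∀ i j, i + 1 < j → j ≤ m → ¬ H.Adj (g i) (g j) := by
    intro i j hij hjm hadj
    apply hmin (m - (j - i - 1)) (by omega)
    refine ⟨p, q, hpA, hqB, exists_walk_of_chain' (G := H) (m - (j - i - 1))
      (fun s => if s ≤ i then g s else g (s + (j - i - 1))) ?_ p q ?_ ?_⟩
    · intro s hs
      show H.Adj (if s ≤ i then g s else g (s + (j - i - 1)))
        (if s + 1 ≤ i then g (s + 1) else g (s + 1 + (j - i - 1)))
      split_ifs with h1 h2 h2
      · exact hadjg s (by omega)
      · have hsi : s = i := by omega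
        subst hsi
        rw [show s + 1 + (j - s - 1) = j by omega]
        exact hadj
      · omega
      · rw [show s + 1 + (j - i - 1) = s + (j - i - 1) + 1 by omega]
        exact hadjg (s + (j - i - 1)) (by omega)
    · show (if (0:ℕ) ≤ i then g 0 else g (0 + (j - i - 1))) = p
      rw [if_pos (Nat.zero_le i)]; exact hg0
    · show (if m - (j - i - 1) ≤ i then g (m - (j - i - 1))
          else g (m - (j - i - 1) + (j - i - 1))) = q
      rw [if_neg (by omega : ¬ m - (j - i - 1) ≤ i),
        show m - (j - i - 1) + (j - i - 1) = m by omega]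
      exact hgm
  -- assemble the EndsPath
  refine ⟨m, fun i => ↑(g i.1), ⟨?_, ?_⟩, ?_, ?_, ?_⟩
  · intro i j hij
    have : g i.1 = g j.1 := Subtype.ext hij
    rcases lt_trichotomy i.1 j.1 with h | h | h
    · exact absurd this (hinjg _ _ h (by omega))
    · exact Fin.ext h
    · exact absurd this.symm (hinjg _ _ h (by omega))
  · intro i j
    constructor
    · intro hj1
      have := hadjg i.1 (by omega)
      rw [← hj1, hH, hG] at this
      exact this
    · intro hij
      have hne : g i.1 ≠ g j.1 := hinjg _ _ (by omega) (by omega)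
      have hnadj := hnonadj i.1 j.1 hij (by omega)
      refine ⟨fun h => hne (Subtype.ext h), ?_⟩
      by_contra hpos
      push_neg at hpos
      have hTadj : T.Adj ↑(g i.1) ↑(g j.1) := ⟨fun h => hne (Subtype.ext h), le_of_lt hpos⟩
      exact hnadj (by rw [hH, hG]; exact hTadj)
  · show ↑(g 0) ∈ A
    rw [hg0]; exact hpA
  · show ↑(g m) ∈ B
    rw [hgm]; exact hqB
  · intro i hi0 hil
    have hi0' : 0 < i.1 := by
      rcases Nat.eq_zero_or_pos i.1 with h | h
      · exact absurd (Fin.ext h) hi0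
      · exact h
    have hil' : i.1 < m := by
      rcases Nat.lt_or_ge i.1 m with h | h
      · exact h
      · exact absurd (Fin.ext (by omega : i.1 = m)) hil
    have hXmem : ↑(g i.1) ∈ X := (g i.1).2
    rcases hXmem with (hmem | hmem) | hmem
    · exact absurd hmem (hspliceA i.1 hi0' hil')
    · exact absurd hmem (hspliceB i.1 hi0' hil')
    · exact hmem

end Trigraph

namespace Trigraph
variable {V : Type}

lemma cross_parity (T : Trigraph V) (hBerge : T.Berge)
    {A1 B1 C1 A2 B2 C2 : Set V}
    (hd : ([A1, B1, C1, A2, B2, C2] : List (Set V)).Pairwise Disjoint)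
    (hAA : ∀ u ∈ A1, ∀ v ∈ A2, T.StrongAdj u v)
    (hBB : ∀ u ∈ B1, ∀ v ∈ B2, T.StrongAdj u v)
    (hanti : ∀ u ∈ A1 ∪ B1 ∪ C1, ∀ v ∈ A2 ∪ B2 ∪ C2,
      ¬ (u ∈ A1 ∧ v ∈ A2) → ¬ (u ∈ B1 ∧ v ∈ B2) → T.StrongAntiAdj u v)
    {k k' : ℕ} {f : Fin (k+1) → V} {f' : Fin (k'+1) → V}
    (hf : T.EndsPath A1 B1 C1 k f) (hf' : T.EndsPath A2 B2 C2 k' f') :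
    k % 2 = k' % 2 := by
  classical
  -- extract disjointness facts
  obtain ⟨h1d, hd⟩ := List.pairwise_cons.mp hd
  obtain ⟨h2d, hd⟩ := List.pairwise_cons.mp hd
  obtain ⟨h3d, hd⟩ := List.pairwise_cons.mp hd
  obtain ⟨h4d, hd⟩ := List.pairwise_cons.mp hd
  obtain ⟨h5d, -⟩ := List.pairwise_cons.mp hd
  have dA1B1 : Disjoint A1 B1 := h1d B1 (by simp)
  have dA1C1 : Disjoint A1 C1 := h1d C1 (by simp)
  have dB1C1 : Disjoint B1 C1 := h2d C1 (by simp)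
  have dA2B2 : Disjoint A2 B2 := h4d B2 (by simp)
  have dA2C2 : Disjoint A2 C2 := h4d C2 (by simp)
  have dB2C2 : Disjoint B2 C2 := h5d C2 (by simp)
  have dX12 : Disjoint (A1 ∪ B1 ∪ C1) (A2 ∪ B2 ∪ C2) := by
    rw [Set.disjoint_left]
    rintro x ((h | h) | h) ((h' | h') | h')
    exacts [Set.disjoint_left.mp (h1d A2 (by simp)) h h',
      Set.disjoint_left.mp (h1d B2 (by simp)) h h',
      Set.disjoint_left.mp (h1d C2 (by simp)) h h',
      Set.disjoint_left.mp (h2d A2 (by simp)) h h',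
      Set.disjoint_left.mp (h2d B2 (by simp)) h h',
      Set.disjoint_left.mp (h2d C2 (by simp)) h h',
      Set.disjoint_left.mp (h3d A2 (by simp)) h h',
      Set.disjoint_left.mp (h3d B2 (by simp)) h h',
      Set.disjoint_left.mp (h3d C2 (by simp)) h h']
  -- endpoints force length ≥ 1
  have hk1 : 1 ≤ k := by
    by_contra h
    have hk0 : k = 0 := by omega
    subst hk0
    have hlast := hf.2.2.1
    rw [show (Fin.last 0) = 0 from Fin.ext (by simp)] at hlast
    exact Set.disjoint_left.mp dA1B1 hf.2.1 hlast
  have hk'1 : 1 ≤ k' := by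
    by_contra h
    have hk0 : k' = 0 := by omega
    subst hk0
    have hlast := hf'.2.2.1
    rw [show (Fin.last 0) = 0 from Fin.ext (by simp)] at hlast
    exact Set.disjoint_left.mp dA2B2 hf'.2.1 hlast
  -- location of path vertices
  have locf : ∀ i : Fin (k+1), (i.val = 0 ∧ f i ∈ A1) ∨ (i.val = k ∧ f i ∈ B1) ∨
      (0 < i.val ∧ i.val < k ∧ f i ∈ C1) := by
    intro i
    by_cases h0 : i.val = 0
    · exact Or.inl ⟨h0, by rw [show i = 0 from Fin.ext (by simp [h0])]; exact hf.2.1⟩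
    by_cases hl : i.val = k
    · exact Or.inr (Or.inl ⟨hl, by
        rw [show i = Fin.last k from Fin.ext (by simp [hl])]; exact hf.2.2.1⟩)
    · exact Or.inr (Or.inr ⟨Nat.pos_of_ne_zero h0, by have := i.isLt; omega,
        hf.2.2.2 i (fun h => h0 (by simp [h])) (fun h => hl (by simp [h]))⟩)
  have locf' : ∀ i : Fin (k'+1), (i.val = 0 ∧ f' i ∈ A2) ∨ (i.val = k' ∧ f' i ∈ B2) ∨
      (0 < i.val ∧ i.val < k' ∧ f' i ∈ C2) := by
    intro i
    by_cases h0 : i.val = 0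
    · exact Or.inl ⟨h0, by rw [show i = 0 from Fin.ext (by simp [h0])]; exact hf'.2.1⟩
    by_cases hl : i.val = k'
    · exact Or.inr (Or.inl ⟨hl, by
        rw [show i = Fin.last k' from Fin.ext (by simp [hl])]; exact hf'.2.2.1⟩)
    · exact Or.inr (Or.inr ⟨Nat.pos_of_ne_zero h0, by have := i.isLt; omega,
        hf'.2.2.2 i (fun h => h0 (by simp [h])) (fun h => hl (by simp [h]))⟩)
  -- suppose parities differ
  by_contra hpar
  have hodd : (k + k') % 2 = 1 := by omega
  set n : ℕ := (k + k' + 1) / 2 with hn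
  have h2n : 2 * n + 1 = k + k' + 2 := by omega
  have hn2 : 2 ≤ n := by omega
  -- the cyclic chain
  set c : ℕ → V := fun m =>
    if h : m ≤ k then f ⟨m, by omega⟩ else f' ⟨k + k' + 1 - m, by omega⟩ with hcdef
  have hceq1 : ∀ (m : ℕ) (h : m ≤ k), c m = f ⟨m, by omega⟩ := fun m h => dif_pos h
  have hceq2 : ∀ (m : ℕ) (h : k < m), c m = f' ⟨k + k' + 1 - m, by omega⟩ :=
    fun m h => dif_neg (by omega)
  have hcX1 : ∀ m, m ≤ k → c m ∈ A1 ∪ B1 ∪ C1 := by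
    intro m h
    rw [hceq1 m h]
    rcases locf ⟨m, by omega⟩ with ⟨_, hm⟩ | ⟨_, hm⟩ | ⟨_, _, hm⟩
    · exact Or.inl (Or.inl hm)
    · exact Or.inl (Or.inr hm)
    · exact Or.inr hm
  have hcX2 : ∀ m, k < m → c m ∈ A2 ∪ B2 ∪ C2 := by
    intro m h
    rw [hceq2 m h]
    rcases locf' ⟨k + k' + 1 - m, by omega⟩ with ⟨_, hm⟩ | ⟨_, hm⟩ | ⟨_, _, hm⟩
    · exact Or.inl (Or.inl hm)
    · exact Or.inl (Or.inr hm)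
    · exact Or.inr hm
  -- injectivity of the chain
  have hinj : ∀ m1 m2, m1 < m2 → m2 ≤ k + k' + 1 → c m1 ≠ c m2 := by
    intro m1 m2 h12 h2b heq
    by_cases hm2 : m2 ≤ k
    · rw [hceq1 m1 (by omega), hceq1 m2 hm2] at heq
      have := congrArg Fin.val (hf.1.1 heq)
      simp only [] at this
      omega
    · by_cases hm1 : m1 ≤ k
      · have hu := hcX1 m1 hm1
        have hv := hcX2 m2 (by omega)
        rw [heq] at hu
        exact Set.disjoint_left.mp dX12 hu hv
      · rw [hceq2 m1 (by omega), hceq2 m2 (by omega)] at heq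
        have := congrArg Fin.val (hf'.1.1 heq)
        simp only [] at this
        omega
  have hinj' : ∀ m1 m2, m1 ≤ k + k' + 1 → m2 ≤ k + k' + 1 → c m1 = c m2 → m1 = m2 := by
    intro m1 m2 hb1 hb2 heq
    rcases lt_trichotomy m1 m2 with h | h | h
    · exact absurd heq (hinj m1 m2 h hb2)
    · exact h
    · exact absurd heq.symm (hinj m2 m1 h hb1)
  -- consecutive adjacency
  have hcons : ∀ m, m < k + k' + 1 → T.Adj (c m) (c (m+1)) := by
    intro m hm
    by_cases h1 : m + 1 ≤ k
    · rw [hceq1 m (by omega), hceq1 (m+1) h1]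
      exact (hf.1.2 ⟨m, by omega⟩ ⟨m+1, by omega⟩).1 rfl
    · by_cases h2 : m ≤ k
      · have hmk : m = k := by omega
        have hb1 : c m ∈ B1 := by
          rw [hceq1 m h2, show (⟨m, by omega⟩ : Fin (k+1)) = Fin.last k from
            Fin.ext (by simp [hmk])]
          exact hf.2.2.1
        have hb2 : c (m+1) ∈ B2 := by
          rw [hceq2 (m+1) (by omega), show (⟨k + k' + 1 - (m+1), by omega⟩ : Fin (k'+1)) =
            Fin.last k' from Fin.ext (by simp; omega)]
          exact hf'.2.2.1
        have hS := hBB (c m) hb1 (c (m+1)) hb2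
        exact ⟨hS.1, by rw [hS.2]; norm_num⟩
      · rw [hceq2 m (by omega), hceq2 (m+1) (by omega)]
        have hA := (hf'.1.2 ⟨k + k' + 1 - (m+1), by omega⟩ ⟨k + k' + 1 - m, by omega⟩).1
          (by show k + k' + 1 - m = k + k' + 1 - (m+1) + 1; omega)
        exact ⟨(hA.1).symm, by rw [T.symm]; exact hA.2⟩
  -- the wrap-around strong edge
  have hwrap : T.StrongAdj (c 0) (c (k + k' + 1)) := by
    have h1 : c 0 ∈ A1 := by
      rw [hceq1 0 (by omega), show (⟨0, by omega⟩ : Fin (k+1)) = 0 from Fin.ext (by simp)]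
      exact hf.2.1
    have h2 : c (k + k' + 1) ∈ A2 := by
      rw [hceq2 (k + k' + 1) (by omega),
        show (⟨k + k' + 1 - (k + k' + 1), by omega⟩ : Fin (k'+1)) = 0 from
          Fin.ext (by simp)]
      exact hf'.2.1
    exact hAA (c 0) h1 (c (k + k' + 1)) h2
  -- non-consecutive pairs are antiadjacent
  have hcB : ∀ m1 m2, m1 < m2 → m2 ≤ k + k' + 1 → ¬ (m2 = m1 + 1) →
      ¬ (m1 = 0 ∧ m2 = k + k' + 1) → T.theta (c m1) (c m2) ≤ 0 := by
    intro m1 m2 h12 hb hne1 hne0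
    by_cases hm2 : m2 ≤ k
    · rw [hceq1 m1 (by omega), hceq1 m2 hm2]
      exact ((hf.1.2 ⟨m1, by omega⟩ ⟨m2, by omega⟩).2 (by show m1 + 1 < m2; omega)).2
    by_cases hm1 : k < m1
    · rw [hceq2 m1 hm1, hceq2 m2 (by omega), T.symm]
      exact ((hf'.1.2 ⟨k + k' + 1 - m2, by omega⟩ ⟨k + k' + 1 - m1, by omega⟩).2
        (by show (k + k' + 1 - m2) + 1 < k + k' + 1 - m1; omega)).2
    · push_neg at hm1
      have hu : c m1 ∈ A1 ∪ B1 ∪ C1 := hcX1 m1 hm1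
      have hv : c m2 ∈ A2 ∪ B2 ∪ C2 := hcX2 m2 (by omega)
      have hnA : ¬ (c m1 ∈ A1 ∧ c m2 ∈ A2) := by
        rintro ⟨huA, hvA⟩
        rw [hceq1 m1 hm1] at huA
        rw [hceq2 m2 (by omega)] at hvA
        have e1 : m1 = 0 := by
          rcases locf ⟨m1, by omega⟩ with ⟨h, _⟩ | ⟨_, hB⟩ | ⟨_, _, hC⟩
          · exact h
          · exact absurd hB (fun hB => Set.disjoint_left.mp dA1B1 huA hB)
          · exact absurd hC (fun hC => Set.disjoint_left.mp dA1C1 huA hC)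
        have e2 : k + k' + 1 - m2 = 0 := by
          rcases locf' ⟨k + k' + 1 - m2, by omega⟩ with ⟨h, _⟩ | ⟨_, hB⟩ | ⟨_, _, hC⟩
          · exact h
          · exact absurd hB (fun hB => Set.disjoint_left.mp dA2B2 hvA hB)
          · exact absurd hC (fun hC => Set.disjoint_left.mp dA2C2 hvA hC)
        exact hne0 ⟨e1, by omega⟩
      have hnB : ¬ (c m1 ∈ B1 ∧ c m2 ∈ B2) := by
        rintro ⟨huB, hvB⟩
        rw [hceq1 m1 hm1] at huB
        rw [hceq2 m2 (by omega)] at hvB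
        have e1 : m1 = k := by
          rcases locf ⟨m1, by omega⟩ with ⟨_, hA⟩ | ⟨h, _⟩ | ⟨_, _, hC⟩
          · exact absurd hA (fun hA => Set.disjoint_left.mp dA1B1 hA huB)
          · exact h
          · exact absurd hC (fun hC => Set.disjoint_left.mp dB1C1 huB hC)
        have e2 : k + k' + 1 - m2 = k' := by
          rcases locf' ⟨k + k' + 1 - m2, by omega⟩ with ⟨_, hA⟩ | ⟨h, _⟩ | ⟨_, _, hC⟩
          · exact absurd hA (fun hA => Set.disjoint_left.mp dA2B2 hA hvB)
          · exact h
          · exact absurd hC (fun hC => Set.disjoint_left.mp dB2C2 hvB hC)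
        exact hne1 (by omega)
      have := hanti (c m1) hu (c m2) hv hnA hnB
      rw [this.2]
      norm_num
  -- the realization graph and the odd hole
  haveI : NeZero (2 * n + 1) := ⟨by omega⟩
  haveI : Fact (1 < 2 * n + 1) := ⟨by omega⟩
  have hone : (1 : ZMod (2 * n + 1)).val = 1 := ZMod.val_one _
  have hvlt : ∀ z : ZMod (2 * n + 1), z.val ≤ k + k' + 1 := by
    intro z
    have := ZMod.val_lt z
    omega
  set G : SimpleGraph V := T.pathGraph c (k + k') with hG
  have key : ∀ i j : ZMod (2 * n + 1), i.val < j.val →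
      (G.Adj (c i.val) (c j.val) ↔ (j = i + 1 ∨ i = j + 1)) := by
    intro i j hij
    have hjle := hvlt j
    have hile := hvlt i
    have hri : (j = i + 1) ↔ j.val = i.val + 1 := by
      rw [← (ZMod.val_injective (2 * n + 1)).eq_iff (a := j) (b := i + 1),
        ZMod.val_add, hone, Nat.mod_eq_of_lt (by omega : i.val + 1 < 2 * n + 1)]
    have hrj : (i = j + 1) ↔ (i.val = 0 ∧ j.val = k + k' + 1) := by
      rw [← (ZMod.val_injective (2 * n + 1)).eq_iff (a := i) (b := j + 1),
        ZMod.val_add, hone]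
      by_cases hj : j.val = k + k' + 1
      · rw [show (j.val + 1) % (2 * n + 1) = 0 by
          rw [show j.val + 1 = 2 * n + 1 by omega]; exact Nat.mod_self _]
        constructor
        · intro h; exact ⟨h, hj⟩
        · rintro ⟨h, _⟩; exact h
      · rw [Nat.mod_eq_of_lt (by omega : j.val + 1 < 2 * n + 1)]
        constructor
        · intro h; omega
        · rintro ⟨_, h⟩; exact absurd h hj
    rw [hri, hrj]
    constructor
    · rintro (hS | ⟨hsw, m, hm, hor⟩)
      · by_contra hcon
        push_neg at hcon
        obtain ⟨hc1, hc2⟩ := hcon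
        have hle := hcB i.val j.val hij hjle hc1 (fun hh => hc2 hh.1 hh.2)
        rw [hS.2] at hle
        norm_num at hle
      · rcases hor with ⟨e1, e2⟩ | ⟨e1, e2⟩
        · have hm1 : m = i.val := hinj' m i.val (by omega) hile e1.symm
          have hm2 : m + 1 = j.val := hinj' (m+1) j.val (by omega) hjle e2.symm
          left; omega
        · have hm1 : m = j.val := hinj' m j.val (by omega) hjle e1.symm
          have hm2 : m + 1 = i.val := hinj' (m+1) i.val (by omega) hile e2.symm
          omega
    · rintro (h | ⟨h0, hlast⟩)
      · have hadj := hcons i.val (by omega)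
        rw [h]
        rcases T.range (c i.val) (c (i.val + 1)) with hm | hz | hp
        · exfalso
          have := hadj.2
          omega
        · exact Or.inr ⟨⟨hadj.1, hz⟩, i.val, by omega, Or.inl ⟨rfl, rfl⟩⟩
        · exact Or.inl ⟨hadj.1, hp⟩
      · rw [h0, hlast]
        exact Or.inl hwrap
  have hole : GraphHasOddHole G := by
    refine ⟨n, hn2, fun z => c z.val, ?_, ?_⟩
    · intro z1 z2 h
      have heq : c z1.val = c z2.val := h
      rcases lt_trichotomy z1.val z2.val with hlt | heqv | hgt
      · exact absurd heq (hinj z1.val z2.val hlt (hvlt z2))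
      · exact ZMod.val_injective _ heqv
      · exact absurd heq.symm (hinj z2.val z1.val hgt (hvlt z1))
    · intro i j
      rcases lt_trichotomy i.val j.val with h | h | h
      · exact key i j h
      · have : i = j := ZMod.val_injective _ h
        subst this
        have hne : ∀ z : ZMod (2 * n + 1), z ≠ z + 1 := by
          intro z hcon
          have hv := ZMod.val_lt z
          have hcv := congrArg ZMod.val hcon
          rw [ZMod.val_add, hone] at hcv
          rcases Nat.lt_or_ge (z.val + 1) (2 * n + 1) with hlt | hge
          · rw [Nat.mod_eq_of_lt hlt] at hcv
            omega
          · rw [show z.val + 1 = 2 * n + 1 by omega, Nat.mod_self] at hcv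
            omega
        constructor
        · intro hadj
          exact absurd hadj (G.loopless.irrefl (c i.val))
        · rintro (h | h) <;> exact absurd h (hne i)
      · rw [SimpleGraph.adj_comm, or_comm]
        exact key j i h
  exact (hBerge G (T.pathGraph_isRealization c (k + k'))).1 hole

end Trigraph

/-- In a Berge trigraph with a 2-join split `(A1, B1, C1, A2, B2, C2)`, all
paths with one end in `Ai`, the other end in `Bi` and interior in `Ci` (for i = 1, 2)
have lengths of the same parity. -/
theorem stmt_10 {V : Type} [Fintype V] (T : Trigraph V) (hBerge : T.Berge)
    (A1 B1 C1 A2 B2 C2 : Set V) (hsplit : T.IsTwoJoinSplit A1 B1 C1 A2 B2 C2) :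
    ∀ s t : Set V × Set V × Set V,
      (s = (A1, B1, C1) ∨ s = (A2, B2, C2)) → (t = (A1, B1, C1) ∨ t = (A2, B2, C2)) →
      ∀ (k k' : ℕ) (f : Fin (k + 1) → V) (f' : Fin (k' + 1) → V),
        T.EndsPath s.1 s.2.1 s.2.2 k f → T.EndsPath t.1 t.2.1 t.2.2 k' f' →
        k % 2 = k' % 2 := by
  obtain ⟨hA1, hB1, hA2, hB2, hd, hcover, hsw, hAA, hBB, hanti, h31, h32, hdeg1, hdeg2,
    hcomp1, hcomp2⟩ := hsplit
  have hd' := hd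
  obtain ⟨h1d, hd'⟩ := List.pairwise_cons.mp hd'
  obtain ⟨h2d, hd'⟩ := List.pairwise_cons.mp hd'
  obtain ⟨h3d, hd'⟩ := List.pairwise_cons.mp hd'
  obtain ⟨h4d, hd'⟩ := List.pairwise_cons.mp hd'
  have dA1B1 : Disjoint A1 B1 := h1d B1 (by simp)
  have dA2B2 : Disjoint A2 B2 := h4d B2 (by simp)
  obtain ⟨k2, f2, hP2⟩ := T.exists_endsPath A2 B2 C2 hA2 dA2B2 hcomp2
  obtain ⟨k1, f1, hP1⟩ := T.exists_endsPath A1 B1 C1 hA1 dA1B1 hcomp1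
  intro s t hs ht k k' f f' hf hf'
  rcases hs with rfl | rfl <;> rcases ht with rfl | rfl
  · have e1 := T.cross_parity hBerge hd hAA hBB hanti hf hP2
    have e2 := T.cross_parity hBerge hd hAA hBB hanti hf' hP2
    omega
  · exact T.cross_parity hBerge hd hAA hBB hanti hf hf'
  · exact (T.cross_parity hBerge hd hAA hBB hanti hf' hf).symm
  · have e1 := T.cross_parity hBerge hd hAA hBB hanti hP1 hf
    have e2 := T.cross_parity hBerge hd hAA hBB hanti hP1 hf'
    omega
end
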